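/- The number of x-parking functions equals n! · Vol(Π_n(x)): for x ∈ ℕ^n, the number of sequences (a_1,…,a_n) of positive integers whose increasing rearrangement b_1 ≤ ⋯ ≤ b_n satisfies b_i ≤ x_1+⋯+x_i for all i equals n! times the volume of Π_n(x), i.e., equals ∑_{k ∈ K_n} binom(n; k_1,…,k_n) x_1^{k_1}⋯x_n^{k_n}. -/
import Mathlib

open MeasureTheory Finset
open scoped ENNReal

variable {m : ℕ}

def PS (x : Fin (m+1) → ℕ) (i : Fin (m+1)) : ℕ := ∑ l ∈ Finset.Iic i, x l
def pS (x : Fin (m+1) → ℕ) (i : Fin (m+1)) : ℕ := ∑ l ∈ Finset.Iio i, x l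

lemma pS_add (x : Fin (m+1) → ℕ) (i : Fin (m+1)) : pS x i + x i = PS x i := by
  rw [PS, pS, ← Finset.Iio_insert, Finset.sum_insert (by simp), add_comm]

lemma PS_mono (x : Fin (m+1) → ℕ) {i j : Fin (m+1)} (h : i ≤ j) : PS x i ≤ PS x j :=
  Finset.sum_le_sum_of_subset (Finset.Iic_subset_Iic.2 h)

lemma PS_le_pS (x : Fin (m+1) → ℕ) {i j : Fin (m+1)} (h : i < j) : PS x i ≤ pS x j :=
  Finset.sum_le_sum_of_subset (fun l hl => Finset.mem_Iio.2 ((Finset.mem_Iic.1 hl).trans_lt h))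

lemma pS_le_PS (x : Fin (m+1) → ℕ) (i : Fin (m+1)) : pS x i ≤ PS x i := by
  rw [← pS_add]; omega

/-- the least index whose partial sum reaches `u` works as a block -/
lemma cover_nat (x : Fin (m+1) → ℕ) {u : ℕ} (h0 : 0 < u) (hle : u ≤ PS x (Fin.last m)) :
    ∃ i, pS x i < u ∧ u ≤ PS x i := by
  classical
  set F := Finset.univ.filter (fun i : Fin (m+1) => u ≤ PS x i) with hF
  have hne : F.Nonempty := ⟨Fin.last m, by simp [hF, hle]⟩
  set i := F.min' hne with hi
  have hiF : i ∈ F := F.min'_mem hne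
  have hiu : u ≤ PS x i := (Finset.mem_filter.1 hiF).2
  refine ⟨i, ?_, hiu⟩
  by_contra hc
  push_neg at hc
  have hipos : (i : ℕ) ≠ 0 := by
    intro hz
    have : pS x i = 0 := by
      rw [pS]
      have : Finset.Iio i = ∅ := by
        ext l; simp [Finset.mem_Iio, Fin.lt_def, hz]
      simp [this]
    omega
  set i' : Fin (m+1) := ⟨(i : ℕ) - 1, by omega⟩ with hi'
  have hIic : Finset.Iic i' = Finset.Iio i := by
    ext l
    simp only [Finset.mem_Iic, Finset.mem_Iio, Fin.le_def, Fin.lt_def, hi']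
    omega
  have hPSi' : PS x i' = pS x i := by rw [PS, pS, hIic]
  have hi'F : i' ∈ F := by
    simp only [hF, Finset.mem_filter, Finset.mem_univ, true_and, hPSi']
    omega
  have := F.min'_le i' hi'F
  rw [← hi] at this
  have : i ≤ i' := this
  rw [Fin.le_def] at this
  simp only [hi'] at this
  omega

lemma block_le_iff_nat (x : Fin (m+1) → ℕ) {u : ℕ} {c i : Fin (m+1)}
    (h1 : pS x c < u) (h2 : u ≤ PS x c) : (u ≤ PS x i ↔ c ≤ i) := by
  constructor
  · intro h
    by_contra hc
    push_neg at hc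
    exact absurd h (by have := PS_le_pS x hc; omega)
  · intro h; exact h2.trans (PS_mono x h)

lemma cover_real (x : Fin (m+1) → ℕ) {u : ℝ} (h0 : 0 < u) (hle : u ≤ (PS x (Fin.last m) : ℝ)) :
    ∃ i, (pS x i : ℝ) < u ∧ u ≤ (PS x i : ℝ) := by
  classical
  set F := Finset.univ.filter (fun i : Fin (m+1) => u ≤ (PS x i : ℝ)) with hF
  have hne : F.Nonempty := ⟨Fin.last m, by simp [hF, hle]⟩
  set i := F.min' hne with hi
  have hiF : i ∈ F := F.min'_mem hne
  have hiu : u ≤ (PS x i : ℝ) := (Finset.mem_filter.1 hiF).2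
  refine ⟨i, ?_, hiu⟩
  by_contra hc
  push_neg at hc
  have hipos : (i : ℕ) ≠ 0 := by
    intro hz
    have : pS x i = 0 := by
      rw [pS]
      have : Finset.Iio i = ∅ := by ext l; simp [Finset.mem_Iio, Fin.lt_def, hz]
      simp [this]
    rw [this] at hc; simp at hc; linarith
  set i' : Fin (m+1) := ⟨(i : ℕ) - 1, by omega⟩ with hi'
  have hIic : Finset.Iic i' = Finset.Iio i := by
    ext l
    simp only [Finset.mem_Iic, Finset.mem_Iio, Fin.le_def, Fin.lt_def, hi']
    omega
  have hPSi' : PS x i' = pS x i := by rw [PS, pS, hIic]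
  have hi'F : i' ∈ F := by
    simp only [hF, Finset.mem_filter, Finset.mem_univ, true_and, hPSi']
    linarith
  have h2 := F.min'_le i' hi'F
  rw [← hi] at h2
  rw [Fin.le_def] at h2
  simp only [hi'] at h2
  omega

lemma block_le_iff_real (x : Fin (m+1) → ℕ) {u : ℝ} {c i : Fin (m+1)}
    (h1 : (pS x c : ℝ) < u) (h2 : u ≤ (PS x c : ℝ)) : (u ≤ (PS x i : ℝ) ↔ c ≤ i) := by
  constructor
  · intro h
    by_contra hcon
    push_neg at hcon
    have := PS_le_pS x hcon
    have : (PS x i : ℝ) ≤ (pS x c : ℝ) := by exact_mod_cast this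
    linarith
  · intro h
    exact h2.trans (by exact_mod_cast PS_mono x h)

def Valid (b : Fin (m+1) → Fin (m+1)) : Prop :=
  ∀ i : Fin (m+1), (i : ℕ) + 1 ≤ #(Finset.univ.filter (fun j => b j ≤ i))

instance : DecidablePred (Valid (m := m)) := fun _ => by unfold Valid; infer_instance

lemma block_unique_nat (x : Fin (m+1) → ℕ) {u : ℕ} {c c' : Fin (m+1)}
    (h1 : pS x c < u) (h2 : u ≤ PS x c) (h1' : pS x c' < u) (h2' : u ≤ PS x c') : c = c' :=
  le_antisymm ((block_le_iff_nat x h1 h2).1 h2') ((block_le_iff_nat x h1' h2').1 h2)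

lemma filter_transfer_nat (x : Fin (m+1) → ℕ) (a : Fin (m+1) → ℕ) (b : Fin (m+1) → Fin (m+1))
    (hb : ∀ j, pS x (b j) < a j ∧ a j ≤ PS x (b j)) (i : Fin (m+1)) :
    Finset.univ.filter (fun j => a j ≤ PS x i) = Finset.univ.filter (fun j => b j ≤ i) :=
  Finset.filter_congr (fun j _ => by
    simp only [block_le_iff_nat x (hb j).1 (hb j).2])

theorem partA (x : Fin (m+1) → ℕ) :
    Nat.card {a : Fin (m+1) → ℕ // (∀ i, 1 ≤ a i) ∧
        ∀ i : Fin (m+1), (i : ℕ) + 1 ≤ #(Finset.univ.filter (fun j => a j ≤ PS x i))} =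
      ∑ b ∈ Finset.univ.filter (Valid (m := m)), ∏ j, x (b j) := by
  classical
  have cardFb : ∀ b : Fin (m+1) → Fin (m+1),
      #(Fintype.piFinset (fun j => Finset.Ioc (pS x (b j)) (PS x (b j)))) = ∏ j, x (b j) := by
    intro b
    rw [Fintype.card_piFinset]
    apply Finset.prod_congr rfl
    intro j _
    have h1 := pS_add x (b j)
    rw [Nat.card_Ioc]
    omega
  set F : Finset (Fin (m+1) → ℕ) := (Finset.univ.filter (Valid (m := m))).biUnion
    (fun b => Fintype.piFinset (fun j => Finset.Ioc (pS x (b j)) (PS x (b j)))) with hF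
  have key : ∀ a : Fin (m+1) → ℕ, ((∀ i, 1 ≤ a i) ∧
      ∀ i : Fin (m+1), (i : ℕ) + 1 ≤ #(Finset.univ.filter (fun j => a j ≤ PS x i))) ↔ a ∈ F := by
    intro a
    constructor
    · rintro ⟨h1, h2⟩
      have hlast := h2 (Fin.last m)
      have huniv : Finset.univ.filter (fun j => a j ≤ PS x (Fin.last m)) = Finset.univ := by
        apply Finset.eq_univ_of_card
        have : #(Finset.univ.filter (fun j => a j ≤ PS x (Fin.last m))) ≤ m + 1 := by
          have := Finset.card_filter_le Finset.univ (fun j => a j ≤ PS x (Fin.last m))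
          simpa using this
        simp only [Fin.val_last] at hlast
        simp only [Fintype.card_fin]
        omega
      have hub : ∀ j, a j ≤ PS x (Fin.last m) := by
        intro j
        have hj : j ∈ Finset.univ.filter (fun j => a j ≤ PS x (Fin.last m)) := by
          rw [huniv]; exact Finset.mem_univ j
        exact (Finset.mem_filter.1 hj).2
      choose b hb1 hb2 using fun j => cover_nat x (h1 j) (hub j)
      have hbV : Valid b := by
        intro i
        rw [← filter_transfer_nat x a b (fun j => ⟨hb1 j, hb2 j⟩) i]
        exact h2 i
      refine Finset.mem_biUnion.2 ⟨b, Finset.mem_filter.2 ⟨Finset.mem_univ _, hbV⟩, ?_⟩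
      exact Fintype.mem_piFinset.2 fun j => Finset.mem_Ioc.2 ⟨hb1 j, hb2 j⟩
    · intro ha
      obtain ⟨b, hbmem, hab⟩ := Finset.mem_biUnion.1 ha
      have hbV : Valid b := (Finset.mem_filter.1 hbmem).2
      have hb : ∀ j, pS x (b j) < a j ∧ a j ≤ PS x (b j) := fun j =>
        Finset.mem_Ioc.1 (Fintype.mem_piFinset.1 hab j)
      refine ⟨fun j => by have := (hb j).1; omega, fun i => ?_⟩
      rw [filter_transfer_nat x a b hb i]
      exact hbV i
  have : Nat.card {a : Fin (m+1) → ℕ // (∀ i, 1 ≤ a i) ∧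
      ∀ i : Fin (m+1), (i : ℕ) + 1 ≤ #(Finset.univ.filter (fun j => a j ≤ PS x i))} = F.card := by
    rw [← Nat.card_eq_finsetCard]
    exact Nat.card_congr (Equiv.subtypeEquivRight key)
  rw [this, hF]
  rw [Finset.card_biUnion]
  · exact Finset.sum_congr rfl (fun b _ => cardFb b)
  · intro b hb b' hb' hne
    simp only [Finset.disjoint_left]
    intro a haF haF'
    apply hne
    funext j
    have h := Finset.mem_Ioc.1 (Fintype.mem_piFinset.1 haF j)
    have h' := Finset.mem_Ioc.1 (Fintype.mem_piFinset.1 haF' j)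
    exact block_unique_nat x h.1 h.2 h'.1 h'.2

def fibersEquiv {α β : Type*} (b c : α → β) :
    {σ : α ≃ α // ∀ j, c (σ j) = b j} ≃ ∀ i, {j // b j = i} ≃ {j // c j = i} where
  toFun σ i := (σ : α ≃ α).subtypeEquiv (fun j => by rw [σ.2 j])
  invFun F := ⟨(Equiv.sigmaFiberEquiv b).symm.trans
      ((Equiv.sigmaCongrRight F).trans (Equiv.sigmaFiberEquiv c)),
    fun j => (F (b j) ⟨j, rfl⟩).2⟩
  left_inv σ := Subtype.ext (Equiv.ext fun j => rfl)
  right_inv F := by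
    funext i
    apply Equiv.ext
    rintro ⟨j, rfl⟩
    rfl

/-- fiber counts of a block function -/

def fib (b : Fin (m+1) → Fin (m+1)) (i : Fin (m+1)) : ℕ :=
  #(Finset.univ.filter (fun j => b j = i))

lemma PS_last (x : Fin (m+1) → ℕ) : PS x (Fin.last m) = ∑ i, x i := by
  rw [PS]
  congr 1
  ext l
  simp [Fin.le_last]

lemma exists_fib (kk : Fin (m+1) → ℕ) (hsum : ∑ i, kk i = m + 1) :
    ∃ c : Fin (m+1) → Fin (m+1), ∀ i, fib c i = kk i := by
  classical
  have htot : PS kk (Fin.last m) = m + 1 := by rw [PS_last, hsum]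
  choose c h1 h2 using fun j : Fin (m+1) =>
    cover_nat kk (u := (j : ℕ) + 1) (by omega) (by rw [htot]; omega)
  refine ⟨c, fun i => ?_⟩
  have hPSle : PS kk i ≤ m + 1 := by
    rw [← htot]; exact PS_mono kk (Fin.le_last i)
  have hiff : ∀ j, (c j = i ↔ (pS kk i ≤ (j : ℕ) ∧ (j : ℕ) < PS kk i)) := by
    intro j
    constructor
    · rintro rfl
      have := h1 j; have := h2 j; omega
    · intro h
      exact block_unique_nat kk (h1 j) (h2 j) (by omega) (by omega)
  rw [fib, Finset.filter_congr (fun j _ => by rw [hiff j])]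
  rw [Finset.card_bij' (fun (j : Fin (m+1)) _ => (j : ℕ))
    (fun (t : ℕ) (ht : t ∈ Finset.Ico (pS kk i) (PS kk i)) =>
      (⟨t, by have := Finset.mem_Ico.1 ht; omega⟩ : Fin (m+1)))]
  · rw [Nat.card_Ico]
    have := pS_add kk i
    omega
  · intro j hj
    have := Finset.mem_filter.1 hj
    exact Finset.mem_Ico.2 ⟨this.2.1, this.2.2⟩
  · intro t ht
    have := Finset.mem_Ico.1 ht
    simp only [Finset.mem_filter, Finset.mem_univ, true_and]
    exact this
  · intro j _; rfl
  · intro t _; rfl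

lemma fib_comp (c : Fin (m+1) → Fin (m+1)) (σ : Equiv.Perm (Fin (m+1))) :
    fib (c ∘ σ) = fib c := by
  funext i
  rw [fib, fib]
  apply Finset.card_bij' (fun j _ => σ j) (fun j _ => σ.symm j)
  · intro j hj
    simpa using (Finset.mem_filter.1 hj).2
  · intro j hj
    simp only [Finset.mem_filter, Finset.mem_univ, true_and, Function.comp_apply,
      Equiv.apply_symm_apply]
    exact (Finset.mem_filter.1 hj).2
  · intro j _; simp
  · intro j _; simp

lemma card_fib (kk : Fin (m+1) → ℕ) (hsum : ∑ i, kk i = m + 1) :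
    #(Finset.univ.filter fun b : Fin (m+1) → Fin (m+1) => fib b = kk) =
      Nat.multinomial Finset.univ kk := by
  classical
  obtain ⟨c, hc⟩ := exists_fib kk hsum
  have hcfib : fib c = kk := funext hc
  -- count of permutations mapping to a fixed b with fib b = kk
  have hfibercard : ∀ b : Fin (m+1) → Fin (m+1), fib b = kk →
      #(Finset.univ.filter fun σ : Equiv.Perm (Fin (m+1)) => c ∘ σ = b) = ∏ i, (kk i).factorial := by
    intro b hb
    have h1 : #(Finset.univ.filter fun σ : Equiv.Perm (Fin (m+1)) => c ∘ σ = b) =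
        Fintype.card {σ : Equiv.Perm (Fin (m+1)) // c ∘ σ = b} := (Fintype.card_subtype _).symm
    rw [h1]
    have h2 : Fintype.card {σ : Equiv.Perm (Fin (m+1)) // c ∘ σ = b} =
        Fintype.card {σ : Fin (m+1) ≃ Fin (m+1) // ∀ j, c (σ j) = b j} := by
      apply Fintype.card_congr
      exact Equiv.subtypeEquivRight (fun σ => by
        constructor
        · intro h j; exact congrFun h j
        · intro h; funext j; exact h j)
    rw [h2, Fintype.card_congr (fibersEquiv b c), Fintype.card_pi]
    apply Finset.prod_congr rfl
    intro i _
    have hbc : Fintype.card {j // b j = i} = Fintype.card {j // c j = i} := by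
      rw [Fintype.card_subtype, Fintype.card_subtype]
      change fib b i = fib c i
      rw [hb, hcfib]
    rw [Fintype.card_equiv (Fintype.equivOfCardEq hbc), Fintype.card_subtype]
    change (fib b i).factorial = _
    rw [hb]
  -- n! = card * ∏ kk!
  have hmain : (m + 1).factorial =
      #(Finset.univ.filter fun b : Fin (m+1) → Fin (m+1) => fib b = kk) * ∏ i, (kk i).factorial := by
    have hcardperm : (Finset.univ : Finset (Equiv.Perm (Fin (m+1)))).card = (m+1).factorial := by
      rw [Finset.card_univ, Fintype.card_perm, Fintype.card_fin]
    rw [← hcardperm]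
    rw [Finset.card_eq_sum_card_fiberwise
      (f := fun σ : Equiv.Perm (Fin (m+1)) => c ∘ σ)
      (t := Finset.univ.filter fun b : Fin (m+1) → Fin (m+1) => fib b = kk)
      (fun σ _ => Finset.mem_filter.2 ⟨Finset.mem_univ _, by rw [fib_comp, hcfib]⟩)]
    rw [Finset.sum_congr rfl (fun b hb => hfibercard b (Finset.mem_filter.1 hb).2)]
    rw [Finset.sum_const, smul_eq_mul]
  have hspec := Nat.multinomial_spec Finset.univ kk
  rw [hsum] at hspec
  have hpos : 0 < ∏ i, (kk i).factorial := Finset.prod_pos (fun i _ => (kk i).factorial_pos)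
  apply Nat.eq_of_mul_eq_mul_right hpos
  rw [← hmain, ← hspec, mul_comm]

lemma filter_le_card (b : Fin (m+1) → Fin (m+1)) (i : Fin (m+1)) :
    #(Finset.univ.filter fun j => b j ≤ i) = ∑ l ∈ Finset.Iic i, fib b l := by
  classical
  rw [Finset.card_eq_sum_card_fiberwise (f := b) (t := Finset.Iic i)
    (fun j hj => Finset.mem_Iic.2 (Finset.mem_filter.1 hj).2)]
  apply Finset.sum_congr rfl
  intro l hl
  rw [fib]
  congr 1
  ext j
  simp only [Finset.mem_filter, Finset.mem_univ, true_and]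
  constructor
  · exact fun h => h.2
  · intro h; exact ⟨h ▸ Finset.mem_Iic.1 hl, h⟩

lemma fib_sum (b : Fin (m+1) → Fin (m+1)) : ∑ i, fib b i = m + 1 := by
  classical
  have := Finset.card_eq_sum_card_fiberwise (f := b)
    (s := (Finset.univ : Finset (Fin (m+1)))) (t := Finset.univ) (fun j _ => Finset.mem_univ _)
  simpa [fib] using this.symm

lemma valid_iff (b : Fin (m+1) → Fin (m+1)) :
    Valid b ↔ ∀ j : Fin (m+1), (j : ℕ) + 1 ≤ (m+1) - 1 →
      (j : ℕ) + 1 ≤ ∑ l ∈ Finset.Iic j, fib b l := by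
  constructor
  · intro h j _
    rw [← filter_le_card]
    exact h j
  · intro h i
    rcases lt_or_ge ((i : ℕ) + 1) (m + 1 - 1 + 1) with hlt | hge
    · rw [filter_le_card]
      exact h i (by omega)
    · have hi : (i : ℕ) = m := by have := i.isLt; omega
      have : Finset.univ.filter (fun j => b j ≤ i) = Finset.univ := by
        apply Finset.filter_true_of_mem
        intro j _
        rw [Fin.le_def, hi]
        omega
      rw [this, Finset.card_univ, Fintype.card_fin, hi]

lemma prod_fib (x : Fin (m+1) → ℕ) (b : Fin (m+1) → Fin (m+1)) :
    ∏ j, x (b j) = ∏ i, x i ^ fib b i := by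
  classical
  rw [← Finset.prod_fiberwise_of_maps_to (g := b) (t := Finset.univ)
    (fun j _ => Finset.mem_univ (b j)) (fun j => x (b j))]
  apply Finset.prod_congr rfl
  intro i _
  rw [fib, ← Finset.prod_const]
  apply Finset.prod_congr rfl
  intro j hj
  rw [(Finset.mem_filter.1 hj).2]

theorem partC (x : Fin (m+1) → ℕ) :
    ∑ b ∈ Finset.univ.filter (Valid (m := m)), ∏ j, x (b j) =
      ∑ kk ∈ (Finset.Nat.antidiagonalTuple (m+1) (m+1)).filter
          (fun kk => ∀ j : Fin (m+1), (j : ℕ) + 1 ≤ (m+1) - 1 →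
            (j : ℕ) + 1 ≤ ∑ l ∈ Finset.Iic j, kk l),
        Nat.multinomial Finset.univ kk * ∏ i, x i ^ kk i := by
  classical
  rw [← Finset.sum_fiberwise_of_maps_to (g := fib)
    (t := (Finset.Nat.antidiagonalTuple (m+1) (m+1)).filter
      (fun kk => ∀ j : Fin (m+1), (j : ℕ) + 1 ≤ (m+1) - 1 →
        (j : ℕ) + 1 ≤ ∑ l ∈ Finset.Iic j, kk l))
    (fun b hb => by
      refine Finset.mem_filter.2 ⟨?_, ?_⟩
      · exact Finset.Nat.mem_antidiagonalTuple.2 (fib_sum b)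
      · exact (valid_iff b).1 (Finset.mem_filter.1 hb).2)]
  apply Finset.sum_congr rfl
  intro kk hkk
  have hkk' := Finset.mem_filter.1 hkk
  have hsum : ∑ i, kk i = m + 1 := Finset.Nat.mem_antidiagonalTuple.1 hkk'.1
  have hset : (Finset.univ.filter (Valid (m := m))).filter (fun b => fib b = kk) =
      Finset.univ.filter (fun b => fib b = kk) := by
    ext b
    simp only [Finset.mem_filter, Finset.mem_univ, true_and]
    constructor
    · exact fun h => h.2
    · intro h
      refine ⟨(valid_iff b).2 ?_, h⟩
      intro j hj
      rw [← h] at hkk'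
      exact hkk'.2 j hj
  rw [hset]
  rw [Finset.sum_congr rfl (fun b hb => by
    rw [prod_fib x b, (Finset.mem_filter.1 hb).2])]
  rw [Finset.sum_const, smul_eq_mul, card_fib kk hsum]

lemma block_unique_real (x : Fin (m+1) → ℕ) {u : ℝ} {c c' : Fin (m+1)}
    (h1 : (pS x c : ℝ) < u) (h2 : u ≤ (PS x c : ℝ))
    (h1' : (pS x c' : ℝ) < u) (h2' : u ≤ (PS x c' : ℝ)) : c = c' :=
  le_antisymm ((block_le_iff_real x h1 h2).1 h2') ((block_le_iff_real x h1' h2').1 h2)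

lemma filter_transfer_real (x : Fin (m+1) → ℕ) (u : Fin (m+1) → ℝ) (b : Fin (m+1) → Fin (m+1))
    (hb : ∀ j, (pS x (b j) : ℝ) < u j ∧ u j ≤ (PS x (b j) : ℝ)) (i : Fin (m+1)) :
    Finset.univ.filter (fun j => u j ≤ (PS x i : ℝ)) = Finset.univ.filter (fun j => b j ≤ i) :=
  Finset.filter_congr (fun j _ => by simp only [block_le_iff_real x (hb j).1 (hb j).2])

/-- the open parking region -/

def Box (x : Fin (m+1) → ℕ) (b : Fin (m+1) → Fin (m+1)) : Set (Fin (m+1) → ℝ) :=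
  Set.univ.pi (fun j => Set.Ioc (pS x (b j) : ℝ) (PS x (b j) : ℝ))

def Pk (x : Fin (m+1) → ℕ) : Set (Fin (m+1) → ℝ) :=
  {u | (∀ j, 0 < u j) ∧
    ∀ i : Fin (m+1), (i : ℕ) + 1 ≤ #(Finset.univ.filter (fun j => u j ≤ (PS x i : ℝ)))}

lemma Pk_eq (x : Fin (m+1) → ℕ) :
    Pk x = ⋃ b ∈ Finset.univ.filter (Valid (m := m)), Box x b := by
  classical
  ext u
  simp only [Pk, Box, Set.mem_setOf_eq, Set.mem_iUnion, Set.mem_pi, Set.mem_univ, true_implies,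
    Set.mem_Ioc, Finset.mem_filter, Finset.mem_univ, true_and, exists_prop]
  constructor
  · rintro ⟨h1, h2⟩
    have hlast := h2 (Fin.last m)
    have huniv : Finset.univ.filter (fun j => u j ≤ (PS x (Fin.last m) : ℝ)) = Finset.univ := by
      apply Finset.eq_univ_of_card
      have hle := Finset.card_filter_le Finset.univ (fun j => u j ≤ (PS x (Fin.last m) : ℝ))
      simp only [Finset.card_univ, Fintype.card_fin] at hle ⊢
      simp only [Fin.val_last] at hlast
      omega
    have hub : ∀ j, u j ≤ (PS x (Fin.last m) : ℝ) := by
      intro j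
      have hj : j ∈ Finset.univ.filter (fun j => u j ≤ (PS x (Fin.last m) : ℝ)) := by
        rw [huniv]; exact Finset.mem_univ j
      exact (Finset.mem_filter.1 hj).2
    choose b hb1 hb2 using fun j => cover_real x (h1 j) (hub j)
    refine ⟨b, ?_, fun j => ⟨hb1 j, hb2 j⟩⟩
    intro i
    rw [← filter_transfer_real x u b (fun j => ⟨hb1 j, hb2 j⟩) i]
    exact h2 i
  · rintro ⟨b, hbV, hb⟩
    refine ⟨fun j => lt_of_le_of_lt (by positivity) (hb j).1, fun i => ?_⟩
    rw [filter_transfer_real x u b hb i]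
    exact hbV i

lemma measurableSet_Box (x : Fin (m+1) → ℕ) (b : Fin (m+1) → Fin (m+1)) :
    MeasurableSet (Box x b) :=
  MeasurableSet.univ_pi (fun j => measurableSet_Ioc)

lemma volume_Box (x : Fin (m+1) → ℕ) (b : Fin (m+1) → Fin (m+1)) :
    volume (Box x b) = ((∏ j, x (b j) : ℕ) : ℝ≥0∞) := by
  rw [Box, volume_pi_pi]
  push_cast
  apply Finset.prod_congr rfl
  intro j _
  rw [Real.volume_Ioc]
  rw [show (PS x (b j) : ℝ) - (pS x (b j) : ℝ) = (x (b j) : ℝ) by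
    have := pS_add x (b j); push_cast [← this]; ring]
  exact ENNReal.ofReal_natCast _

lemma volume_Pk (x : Fin (m+1) → ℕ) :
    volume (Pk x) = ((∑ b ∈ Finset.univ.filter (Valid (m := m)), ∏ j, x (b j) : ℕ) : ℝ≥0∞) := by
  classical
  rw [Pk_eq, measure_biUnion_finset ?disj (fun b _ => measurableSet_Box x b)]
  · rw [Finset.sum_congr rfl (fun b (_ : b ∈ Finset.univ.filter (Valid (m := m))) => volume_Box x b)]
    push_cast
    rfl
  case disj =>
    intro b hb b' hb' hne
    simp only [Function.onFun, Set.disjoint_left]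
    intro u hu hu'
    apply hne
    funext j
    have h := hu j (Set.mem_univ j)
    have h' := hu' j (Set.mem_univ j)
    rw [Set.mem_Ioc] at h h'
    exact block_unique_real x h.1 h.2 h'.1 h'.2

lemma measurableSet_Pk (x : Fin (m+1) → ℕ) : MeasurableSet (Pk x) := by
  rw [Pk_eq]
  exact (Finset.univ.filter (Valid (m := m))).measurableSet_biUnion
    (fun b _ => measurableSet_Box x b)

/-- chambers -/
def Ch (σ : Equiv.Perm (Fin (m+1))) : Set (Fin (m+1) → ℝ) := {u | StrictMono (fun j => u (σ j))}

lemma measurableSet_Ch (σ : Equiv.Perm (Fin (m+1))) : MeasurableSet (Ch σ) := by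
  have : Ch σ = ⋂ (p : Fin (m+1) × Fin (m+1)) (_ : p.1 < p.2), {u | u (σ p.1) < u (σ p.2)} := by
    ext u
    simp only [Ch, Set.mem_setOf_eq, Set.mem_iInter]
    exact ⟨fun h p hp => h hp, fun h a b hab => h (a, b) hab⟩
  rw [this]
  exact MeasurableSet.iInter fun p => MeasurableSet.iInter fun _ =>
    measurableSet_lt (measurable_pi_apply _) (measurable_pi_apply _)

lemma Ch_disjoint {σ τ : Equiv.Perm (Fin (m+1))} (hne : σ ≠ τ) : Disjoint (Ch σ) (Ch τ) := by
  rw [Set.disjoint_left]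
  intro u hσ hτ
  replace hσ : StrictMono (fun j => u (σ j)) := hσ
  replace hτ : StrictMono (fun j => u (τ j)) := hτ
  apply hne
  have hrange : Set.range (fun j => u (σ j)) = Set.range (fun j => u (τ j)) := by
    have h1 : Set.range (fun j => u (σ j)) = Set.range u := σ.surjective.range_comp u
    have h2 : Set.range (fun j => u (τ j)) = Set.range u := τ.surjective.range_comp u
    rw [h1, h2]
  haveI : WellFoundedLT (Fin (m+1)) := Finite.to_wellFoundedLT
  have heq : (fun j => u (σ j)) = (fun j => u (τ j)) := (hσ.range_inj hτ).1 hrange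
  have huinj : Function.Injective u := by
    intro a b hab
    have := hσ.injective (a₁ := σ.symm a) (a₂ := σ.symm b) (by simpa using hab)
    simpa using congrArg σ this
  exact Equiv.ext fun j => huinj (congrFun heq j)

lemma card_filter_comp (σ : Equiv.Perm (Fin (m+1))) (p : Fin (m+1) → Prop) [DecidablePred p] :
    #(Finset.univ.filter (fun j => p (σ j))) = #(Finset.univ.filter p) := by
  apply Finset.card_bij' (fun j _ => σ j) (fun j _ => σ.symm j)
  · intro j hj; simpa using (Finset.mem_filter.1 hj).2
  · intro j hj
    simp only [Finset.mem_filter, Finset.mem_univ, true_and, Equiv.apply_symm_apply]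
    exact (Finset.mem_filter.1 hj).2
  · intro j _; simp
  · intro j _; simp

lemma Pk_invariant (x : Fin (m+1) → ℕ) (σ : Equiv.Perm (Fin (m+1))) (u : Fin (m+1) → ℝ) :
    (fun j => u (σ j)) ∈ Pk x ↔ u ∈ Pk x := by
  classical
  simp only [Pk, Set.mem_setOf_eq]
  constructor
  · rintro ⟨h1, h2⟩
    refine ⟨fun j => by simpa using h1 (σ.symm j), fun i => ?_⟩
    rw [← card_filter_comp σ]
    exact h2 i
  · rintro ⟨h1, h2⟩
    refine ⟨fun j => h1 (σ j), fun i => ?_⟩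
    rw [card_filter_comp σ (fun a => u a ≤ (PS x i : ℝ))]
    exact h2 i

/-- the noninjective set is null -/
lemma volume_noninj : volume {u : Fin (m+1) → ℝ | ¬ Function.Injective u} = 0 := by
  have hsub : {u : Fin (m+1) → ℝ | ¬ Function.Injective u} ⊆
      ⋃ (p : Fin (m+1) × Fin (m+1)) (_ : p.1 ≠ p.2), {u | u p.1 = u p.2} := by
    intro u hu
    simp only [Set.mem_setOf_eq, Function.Injective, not_forall] at hu
    obtain ⟨a, b, hab, hne⟩ := hu
    exact Set.mem_iUnion.2 ⟨(a, b), Set.mem_iUnion.2 ⟨hne, hab⟩⟩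
  refine measure_mono_null hsub (measure_iUnion_null fun p => measure_iUnion_null fun hne => ?_)
  set f : (Fin (m+1) → ℝ) →ₗ[ℝ] ℝ :=
    (LinearMap.proj (R := ℝ) (φ := fun _ : Fin (m+1) => ℝ) p.1) -
    (LinearMap.proj (R := ℝ) (φ := fun _ : Fin (m+1) => ℝ) p.2) with hf
  have : {u : Fin (m+1) → ℝ | u p.1 = u p.2} =
      (LinearMap.ker f : Set (Fin (m+1) → ℝ)) := by
    ext u
    simp only [Set.mem_setOf_eq, SetLike.mem_coe, LinearMap.mem_ker, hf, LinearMap.sub_apply,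
      LinearMap.proj_apply]
    constructor
    · intro h; rw [h]; ring
    · intro h; linarith [h]
  rw [this]
  apply Measure.addHaar_submodule
  intro htop
  have h1 : f (Pi.single p.1 1) = 0 := by
    rw [← LinearMap.mem_ker, htop]; trivial
  simp only [hf, LinearMap.sub_apply, LinearMap.proj_apply, Pi.single_eq_same,
    Pi.single_eq_of_ne (Ne.symm hne)] at h1
  norm_num at h1

lemma volume_hyperplane (i : Fin (m+1)) : volume {y : Fin (m+1) → ℝ | y i = 0} = 0 := by
  have : {y : Fin (m+1) → ℝ | y i = 0} =
      (LinearMap.ker (LinearMap.proj i : (Fin (m+1) → ℝ) →ₗ[ℝ] ℝ) : Set (Fin (m+1) → ℝ)) := by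
    ext y; simp [LinearMap.mem_ker]
  rw [this]
  apply Measure.addHaar_submodule
  intro htop
  have h1 : (LinearMap.proj i : (Fin (m+1) → ℝ) →ₗ[ℝ] ℝ) (Pi.single i 1) = 0 := by
    rw [← LinearMap.mem_ker, htop]; trivial
  simp at h1

/-- symmetrization -/
lemma volume_Pk_eq_factorial_mul (x : Fin (m+1) → ℕ) :
    volume (Pk x) = ((m+1).factorial : ℝ≥0∞) * volume (Pk x ∩ {u | StrictMono u}) := by
  classical
  -- each chamber has the same volume
  have hcham : ∀ σ : Equiv.Perm (Fin (m+1)),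
      volume (Pk x ∩ Ch σ) = volume (Pk x ∩ {u | StrictMono u}) := by
    intro σ
    have hmp := volume_measurePreserving_piCongrLeft (fun _ : Fin (m+1) => ℝ) σ.symm
    have happ : ∀ (u : Fin (m+1) → ℝ),
        (MeasurableEquiv.piCongrLeft (fun _ : Fin (m+1) => ℝ) σ.symm) u = fun b => u (σ b) := by
      intro u
      funext b
      rw [MeasurableEquiv.coe_piCongrLeft]
      have := Equiv.piCongrLeft_apply_apply (P := fun _ : Fin (m+1) => ℝ) (e := σ.symm) u (σ b)
      simpa using this
    have hpre : (MeasurableEquiv.piCongrLeft (fun _ : Fin (m+1) => ℝ) σ.symm) ⁻¹'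
        (Pk x ∩ {u | StrictMono u}) = Pk x ∩ Ch σ := by
      ext u
      simp only [Set.mem_preimage, Set.mem_inter_iff, happ u, Set.mem_setOf_eq]
      constructor
      · rintro ⟨h1, h2⟩
        exact ⟨(Pk_invariant x σ u).1 h1, h2⟩
      · rintro ⟨h1, h2⟩
        exact ⟨(Pk_invariant x σ u).2 h1, h2⟩
    rw [← hpre, hmp.measure_preimage]
    exact ((measurableSet_Pk x).inter (by simpa [Ch] using measurableSet_Ch (m := m) 1)).nullMeasurableSet
  -- decomposition
  have hcover : Pk x ⊆ (⋃ σ : Equiv.Perm (Fin (m+1)), Pk x ∩ Ch σ) ∪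
      {u : Fin (m+1) → ℝ | ¬ Function.Injective u} := by
    intro u hu
    by_cases hinj : Function.Injective u
    · left
      refine Set.mem_iUnion.2 ⟨Tuple.sort u, hu, ?_⟩
      have hmono : Monotone (u ∘ Tuple.sort u) := Tuple.monotone_sort u
      have : Function.Injective (u ∘ Tuple.sort u) := hinj.comp (Tuple.sort u).injective
      exact hmono.strictMono_of_injective this
    · right; exact hinj
  have hdisj : Pairwise (Function.onFun Disjoint (fun σ : Equiv.Perm (Fin (m+1)) => Pk x ∩ Ch σ)) :=
    fun σ τ hne => ((Ch_disjoint hne).mono (Set.inter_subset_right) (Set.inter_subset_right))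
  have hmeas : ∀ σ : Equiv.Perm (Fin (m+1)), MeasurableSet (Pk x ∩ Ch σ) :=
    fun σ => (measurableSet_Pk x).inter (measurableSet_Ch σ)
  have h1 : volume (Pk x) = volume (⋃ σ : Equiv.Perm (Fin (m+1)), Pk x ∩ Ch σ) := by
    apply le_antisymm
    · calc volume (Pk x) ≤ volume ((⋃ σ : Equiv.Perm (Fin (m+1)), Pk x ∩ Ch σ) ∪
          {u : Fin (m+1) → ℝ | ¬ Function.Injective u}) := measure_mono hcover
      _ ≤ volume (⋃ σ : Equiv.Perm (Fin (m+1)), Pk x ∩ Ch σ) +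
          volume {u : Fin (m+1) → ℝ | ¬ Function.Injective u} := measure_union_le _ _
      _ = volume (⋃ σ : Equiv.Perm (Fin (m+1)), Pk x ∩ Ch σ) := by rw [volume_noninj, add_zero]
    · exact measure_mono (Set.iUnion_subset fun σ => Set.inter_subset_left)
  rw [h1, measure_iUnion hdisj hmeas]
  rw [tsum_eq_sum (s := Finset.univ) (fun σ hσ => absurd (Finset.mem_univ σ) hσ)]
  rw [Finset.sum_congr rfl (fun σ _ => hcham σ), Finset.sum_const, Finset.card_univ,
    Fintype.card_perm, Fintype.card_fin, nsmul_eq_mul]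

/-- counting condition for sorted tuples -/
lemma sorted_count {t : Fin (m+1) → ℝ} (ht : StrictMono t) (c : ℝ) (i : Fin (m+1)) :
    ((i : ℕ) + 1 ≤ #(Finset.univ.filter (fun j => t j ≤ c)) ↔ t i ≤ c) := by
  classical
  constructor
  · intro h
    by_contra hc
    push_neg at hc
    have hsub : Finset.univ.filter (fun j => t j ≤ c) ⊆ Finset.Iio i := by
      intro j hj
      have := (Finset.mem_filter.1 hj).2
      rw [Finset.mem_Iio]
      by_contra hij
      push_neg at hij
      have := ht.monotone hij
      linarith
    have := Finset.card_le_card hsub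
    rw [Fin.card_Iio] at this
    omega
  · intro h
    have hsub : Finset.Iic i ⊆ Finset.univ.filter (fun j => t j ≤ c) := by
      intro j hj
      exact Finset.mem_filter.2 ⟨Finset.mem_univ _, le_trans (ht.monotone (Finset.mem_Iic.1 hj)) h⟩
    have := Finset.card_le_card hsub
    rw [Fin.card_Iic] at this
    omega

def lowerTri : Matrix (Fin (m+1)) (Fin (m+1)) ℝ := fun i j => if j ≤ i then 1 else 0

lemma lowerTri_apply (y : Fin (m+1) → ℝ) (i : Fin (m+1)) :
    Matrix.toLin' (lowerTri (m := m)) y i = ∑ j ∈ Finset.Iic i, y j := by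
  rw [Matrix.toLin'_apply, Matrix.mulVec, dotProduct]
  have : Finset.Iic i = Finset.univ.filter (fun j => j ≤ i) := by
    ext j; simp
  rw [this, Finset.sum_filter]
  apply Finset.sum_congr rfl
  intro j _
  simp only [lowerTri, ite_mul, one_mul, zero_mul]

lemma det_lowerTri : (lowerTri (m := m)).det = 1 := by
  rw [Matrix.det_of_lowerTriangular (lowerTri (m := m))]
  · simp [lowerTri]
  · intro i j hij
    have hij' : i < j := hij
    simp only [lowerTri, if_neg (not_le.2 hij')]

def Pi0 (x : Fin (m+1) → ℕ) : Set (Fin (m+1) → ℝ) :=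
  {y | (∀ i, 0 < y i) ∧ ∀ i : Fin (m+1), ∑ j ∈ Finset.Iic i, y j ≤ (PS x i : ℝ)}

lemma preimage_eq (x : Fin (m+1) → ℕ) :
    (Matrix.toLin' (lowerTri (m := m))) ⁻¹' (Pk x ∩ {u | StrictMono u}) = Pi0 x := by
  ext y
  simp only [Set.mem_preimage, Set.mem_inter_iff, Pk, Pi0, Set.mem_setOf_eq]
  constructor
  · rintro ⟨⟨h1, h2⟩, h3⟩
    constructor
    · intro i
      rcases Nat.eq_zero_or_pos (i : ℕ) with hi | hi
      · have hIic : Finset.Iic i = {i} := by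
          ext l
          simp only [Finset.mem_Iic, Finset.mem_singleton, Fin.le_def, hi, Fin.ext_iff]
          omega
        have := h1 i
        rw [lowerTri_apply, hIic, Finset.sum_singleton] at this
        exact this
      · set i' : Fin (m+1) := ⟨(i : ℕ) - 1, by omega⟩ with hi'
        have hins : Finset.Iic i = insert i (Finset.Iic i') := by
          ext l
          simp only [Finset.mem_Iic, Finset.mem_insert, Fin.le_def, Fin.ext_iff, hi']
          omega
        have hnm : i ∉ Finset.Iic i' := by
          simp only [Finset.mem_Iic, Fin.le_def, hi']
          omega
        have hlt : Matrix.toLin' (lowerTri (m := m)) y i' < Matrix.toLin' (lowerTri (m := m)) y i :=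
          h3 (by rw [Fin.lt_def]; simp only [hi']; omega)
        rw [lowerTri_apply, lowerTri_apply, hins, Finset.sum_insert hnm] at hlt
        linarith
    · intro i
      have := (sorted_count h3 (PS x i : ℝ) i).1 (h2 i)
      rwa [lowerTri_apply] at this
  · rintro ⟨h1, h2⟩
    have hsm : StrictMono (Matrix.toLin' (lowerTri (m := m)) y) := by
      intro i j hij
      rw [lowerTri_apply, lowerTri_apply]
      apply Finset.sum_lt_sum_of_subset (Finset.Iic_subset_Iic.2 hij.le)
        (Finset.mem_Iic.2 le_rfl)
      · rw [Finset.mem_Iic]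
        exact not_le.2 hij
      · exact h1 j
      · intro l _ _
        exact (h1 l).le
    refine ⟨⟨?_, ?_⟩, hsm⟩
    · intro j
      rw [lowerTri_apply]
      exact Finset.sum_pos (fun l _ => h1 l) ⟨j, Finset.mem_Iic.2 le_rfl⟩
    · intro i
      rw [sorted_count hsm, lowerTri_apply]
      exact h2 i

lemma volume_Pi0 (x : Fin (m+1) → ℕ) :
    volume (Pi0 x) = volume (Pk x ∩ {u | StrictMono u}) := by
  rw [← preimage_eq x]
  have hdet : LinearMap.det (Matrix.toLin' (lowerTri (m := m))) ≠ 0 := by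
    rw [LinearMap.det_toLin', det_lowerTri]; norm_num
  rw [Measure.addHaar_preimage_linearMap volume hdet]
  rw [LinearMap.det_toLin', det_lowerTri]
  norm_num

/-- The statement's polytope -/
lemma volume_Pi_statement (x : Fin (m+1) → ℕ) :
    volume {y : Fin (m+1) → ℝ | ∀ i : Fin (m+1), 0 ≤ y i ∧
      ∑ j ∈ Finset.Iic i, y j ≤ ∑ j ∈ Finset.Iic i, (x j : ℝ)} = volume (Pi0 x) := by
  set A := {y : Fin (m+1) → ℝ | ∀ i : Fin (m+1), 0 ≤ y i ∧
      ∑ j ∈ Finset.Iic i, y j ≤ ∑ j ∈ Finset.Iic i, (x j : ℝ)} with hA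
  have hcast : ∀ i : Fin (m+1), (PS x i : ℝ) = ∑ j ∈ Finset.Iic i, (x j : ℝ) := by
    intro i; rw [PS]; push_cast; rfl
  have hsub : Pi0 x ⊆ A := by
    intro y hy
    intro i
    exact ⟨(hy.1 i).le, by rw [← hcast]; exact hy.2 i⟩
  have hdiff : A \ Pi0 x ⊆ ⋃ i, {y : Fin (m+1) → ℝ | y i = 0} := by
    rintro y ⟨hyA, hyn⟩
    simp only [Pi0, Set.mem_setOf_eq, not_and, not_forall] at hyn
    have h2 : ∀ i : Fin (m+1), ∑ j ∈ Finset.Iic i, y j ≤ (PS x i : ℝ) := by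
      intro i; rw [hcast]; exact (hyA i).2
    by_cases hpos : ∀ i, 0 < y i
    · obtain ⟨i, hi⟩ := hyn hpos
      exact absurd (h2 i) hi
    · push_neg at hpos
      obtain ⟨i, hi⟩ := hpos
      exact Set.mem_iUnion.2 ⟨i, le_antisymm hi (hyA i).1⟩
  apply le_antisymm
  · have hA1 : volume A ≤ volume (Pi0 x ∪ ⋃ i, {y : Fin (m+1) → ℝ | y i = 0}) := by
      apply measure_mono
      intro y hy
      by_cases h : y ∈ Pi0 x
      · exact Set.mem_union_left _ h
      · exact Set.mem_union_right _ (hdiff ⟨hy, h⟩)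
    have hA2 : volume (Pi0 x ∪ ⋃ i, {y : Fin (m+1) → ℝ | y i = 0}) ≤
        volume (Pi0 x) + volume (⋃ i, {y : Fin (m+1) → ℝ | y i = 0}) := measure_union_le _ _
    rw [measure_iUnion_null (fun i => volume_hyperplane i), add_zero] at hA2
    exact hA1.trans hA2
  · exact measure_mono hsub
lemma partB (x : Fin (m+1) → ℕ) :
    ((m+1).factorial : ℝ≥0∞) * (volume {y : Fin (m+1) → ℝ | ∀ i : Fin (m+1), 0 ≤ y i ∧
        ∑ j ∈ Finset.Iic i, y j ≤ ∑ j ∈ Finset.Iic i, (x j : ℝ)}) =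
      ((∑ b ∈ Finset.univ.filter (Valid (m := m)), ∏ j, x (b j) : ℕ) : ℝ≥0∞) := by
  rw [volume_Pi_statement x, volume_Pi0 x, ← volume_Pk_eq_factorial_mul x, volume_Pk x]

/-- The number of `x`-parking functions equals `n!·Vol(Π_n(x))`, i.e. equals
`∑_{k ∈ K_n} binom(n; k_1,…,k_n) x_1^{k_1}⋯x_n^{k_n}`.  The condition that the
increasing rearrangement `b` of `a` satisfies `b_i ≤ u_i` is expressed as:
at least `i` of the values `a_j` are `≤ u_i`. -/
theorem card_x_parking_functions (n : ℕ) (hn : 0 < n) (x : Fin n → ℕ) :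
    ((Nat.card {a : Fin n → ℕ // (∀ i, 1 ≤ a i) ∧
        ∀ i : Fin n, (i : ℕ) + 1 ≤
          (Finset.univ.filter (fun j => a j ≤ ∑ l ∈ Finset.Iic i, x l)).card} : ℝ) =
      (n.factorial : ℝ) *
        (volume {y : Fin n → ℝ | ∀ i : Fin n, 0 ≤ y i ∧
          ∑ j ∈ Finset.Iic i, y j ≤ ∑ j ∈ Finset.Iic i, (x j : ℝ)}).toReal) ∧
    Nat.card {a : Fin n → ℕ // (∀ i, 1 ≤ a i) ∧
        ∀ i : Fin n, (i : ℕ) + 1 ≤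
          (Finset.univ.filter (fun j => a j ≤ ∑ l ∈ Finset.Iic i, x l)).card} =
      ∑ k ∈ (Finset.Nat.antidiagonalTuple n n).filter
          (fun k => ∀ j : Fin n, (j : ℕ) + 1 ≤ n - 1 →
            (j : ℕ) + 1 ≤ ∑ l ∈ Finset.Iic j, k l),
        Nat.multinomial Finset.univ k * ∏ i : Fin n, x i ^ (k i) := by
  obtain ⟨m, rfl⟩ : ∃ m, n = m + 1 := ⟨n - 1, by omega⟩
  have hA : Nat.card {a : Fin (m+1) → ℕ // (∀ i, 1 ≤ a i) ∧
      ∀ i : Fin (m+1), (i : ℕ) + 1 ≤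
        (Finset.univ.filter (fun j => a j ≤ ∑ l ∈ Finset.Iic i, x l)).card} =
      ∑ b ∈ Finset.univ.filter (Valid (m := m)), ∏ j, x (b j) := partA x
  constructor
  · have hB := partB x
    have hfin : volume {y : Fin (m+1) → ℝ | ∀ i : Fin (m+1), 0 ≤ y i ∧
        ∑ j ∈ Finset.Iic i, y j ≤ ∑ j ∈ Finset.Iic i, (x j : ℝ)} ≠ ⊤ := by
      intro htop
      rw [htop, ENNReal.mul_top (by exact_mod_cast Nat.factorial_ne_zero (m+1))] at hB
      exact (ENNReal.natCast_ne_top _) hB.symm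
    have := congrArg ENNReal.toReal hB
    rw [ENNReal.toReal_mul, ENNReal.toReal_natCast, ENNReal.toReal_natCast] at this
    rw [hA]
    exact this.symm
  · rw [hA]
    exact partC x
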